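/- Let G be a graph, let P = x_0 x_1 … x_h be a longest path in G, and let 𝒫 be the set of all paths obtainable from P by sequences of elementary rotations keeping the endpoint x_0 fixed. Let R be the set of endpoints (other than x_0) of paths in 𝒫, and let R⁻ and R⁺ be the sets of vertices immediately preceding and following, respectively, the vertices of R along P. Then N_G(R) ⊆ R⁻ ∪ R⁺. -/

import Mathlib

/-- A (simple) path in `G`, represented as the list of its vertices. -/
def IsPathList {V : Type*} (G : SimpleGraph V) (l : List V) : Prop :=
  l.Chain' G.Adj ∧ l.Nodup

/-- `ElemRot G q q'` : the path `q'` is obtained from the path `q = x₀ … xᵢ xᵢ₊₁ … x_h`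
by one elementary rotation at `xᵢ` (with `i < h - 1`), using the edge `(xᵢ, x_h)` of `G`:
`q' = x₀ … xᵢ x_h x_{h-1} … x_{i+1}`.  The start `x₀` is kept fixed. -/
def ElemRot {V : Type*} (G : SimpleGraph V) (q q' : List V) : Prop :=
  ∃ (a b : List V) (x y : V), b ≠ [] ∧ G.Adj x y ∧
    q = a ++ x :: (b ++ [y]) ∧ q' = a ++ x :: y :: b.reverse

/-- The set of ends (other than the start of `P`) of the paths obtainable from `P`
by sequences of elementary rotations. -/
def rotEnds {V : Type*} (G : SimpleGraph V) (P : List V) : Set V :=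
  {v | ∃ Q : List V, Relation.ReflTransGen (ElemRot G) P Q ∧
        Q.getLast? = some v ∧ P.head? ≠ some v}

/-- Vertices immediately preceding a vertex of `R` along the list `P`. -/
def predAlong {V : Type*} (P : List V) (R : Set V) : Set V :=
  {u | ∃ v ∈ R, ∃ i : ℕ, P[i]? = some u ∧ P[i + 1]? = some v}

/-- Vertices immediately following a vertex of `R` along the list `P`. -/
def succAlong {V : Type*} (P : List V) (R : Set V) : Set V :=
  {u | ∃ v ∈ R, ∃ i : ℕ, P[i]? = some v ∧ P[i + 1]? = some u}

open List

section Helpers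

variable {V : Type*}

lemma singleton_prefix_iff {v : V} {l : List V} : [v] <+: l ↔ l.head? = some v := by
  cases l with
  | nil => simp
  | cons a t =>
    constructor
    · intro h
      obtain ⟨h1, _⟩ := List.cons_prefix_cons.mp h
      simp [h1]
    · intro h
      simp only [head?_cons, Option.some.injEq] at h
      subst h
      exact ⟨t, rfl⟩

lemma pair_infix_iff_get {u v : V} {l : List V} :
    [u, v] <:+: l ↔ ∃ i : ℕ, l[i]? = some u ∧ l[i + 1]? = some v := by
  constructor
  · rintro ⟨s, t, rfl⟩
    refine ⟨s.length, ?_, ?_⟩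
    · rw [List.append_assoc, List.getElem?_append_right le_rfl]
      simp
    · rw [List.append_assoc, List.getElem?_append_right (by omega)]
      simp
  · rintro ⟨i, h1, h2⟩
    have hi1 : i + 1 < l.length := by
      by_contra h
      rw [List.getElem?_eq_none (by omega)] at h2
      exact absurd h2 (by simp)
    have hi : i < l.length := by omega
    have e1 : l[i] = u := by
      have := List.getElem?_eq_getElem hi
      rw [h1] at this; exact (Option.some.injEq _ _ ▸ this).symm
    have e2 : l[i+1] = v := by
      have := List.getElem?_eq_getElem hi1
      rw [h2] at this; exact (Option.some.injEq _ _ ▸ this).symm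
    refine ⟨l.take i, l.drop (i + 2), ?_⟩
    have := List.take_append_drop i l
    rw [List.drop_eq_getElem_cons hi, List.drop_eq_getElem_cons hi1] at this
    rw [e1, e2] at this
    simpa using this

lemma pair_infix_append {u v : V} {s t : List V} :
    [u, v] <:+: s ++ t ↔
      [u, v] <:+: s ∨ [u, v] <:+: t ∨ (s.getLast? = some u ∧ t.head? = some v) := by
  induction s with
  | nil =>
    simp only [nil_append, getLast?_nil]
    constructor
    · intro h; exact Or.inr (Or.inl h)
    · rintro (h | h | h)
      · exact absurd h.length_le (by simp)
      · exact h
      · exact absurd h.1 (by simp)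
  | cons a s ih =>
    rw [cons_append, List.infix_cons_iff, List.infix_cons_iff, List.cons_prefix_cons,
      List.cons_prefix_cons, singleton_prefix_iff, singleton_prefix_iff, ih]
    cases s with
    | nil =>
      simp only [nil_append, head?_nil, getLast?_nil, getLast?_singleton, Option.some.injEq]
      constructor
      · rintro (⟨rfl, h⟩ | h | h | ⟨h1, _⟩)
        · exact Or.inr (Or.inr ⟨rfl, h⟩)
        · exact absurd h.length_le (by simp)
        · exact Or.inr (Or.inl h)
        · exact absurd h1 (by simp)
      · rintro ((⟨rfl, h⟩ | h) | h | ⟨rfl, h2⟩)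
        · exact absurd h (by simp)
        · exact absurd h.length_le (by simp)
        · exact Or.inr (Or.inr (Or.inl h))
        · exact Or.inl ⟨rfl, h2⟩
    | cons c s' =>
      rw [List.getLast?_cons_cons]
      simp only [cons_append, head?_cons]
      tauto

lemma rot_pair {a b : List V} {x y u v : V}
    (hp : [u, v] <:+: a ++ x :: y :: b.reverse) :
    [u, v] <:+: a ++ x :: (b ++ [y]) ∨ [v, u] <:+: a ++ x :: (b ++ [y]) ∨ (u = x ∧ v = y) := by
  rcases pair_infix_append.mp hp with h | h | h
  · exact Or.inl (h.trans ⟨[], x :: (b ++ [y]), by simp⟩)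
  · rcases List.infix_cons_iff.mp h with h | h
    · obtain ⟨h1, h2⟩ := List.cons_prefix_cons.mp h
      have h3 := singleton_prefix_iff.mp h2
      simp only [head?_cons, Option.some.injEq] at h3
      exact Or.inr (Or.inr ⟨h1, h3.symm⟩)
    · have hrw : y :: b.reverse = (b ++ [y]).reverse := by simp
      rw [hrw] at h
      have h' : [v, u] <:+: b ++ [y] := by
        rw [← List.reverse_infix]
        simpa using h
      exact Or.inr (Or.inl (h'.trans ⟨a ++ [x], [], by simp⟩))
  · obtain ⟨h1, h2⟩ := h
    simp only [head?_cons, Option.some.injEq] at h2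
    refine Or.inl (pair_infix_append.mpr (Or.inr (Or.inr ⟨h1, ?_⟩)))
    simp [h2]

variable {G : SimpleGraph V}

lemma elemRot_perm {q q' : List V} (h : ElemRot G q q') : q' ~ q := by
  obtain ⟨a, b, x, y, _, _, rfl, rfl⟩ := h
  refine List.Perm.append_left a (List.Perm.cons x ?_)
  calc y :: b.reverse ~ y :: b := (b.reverse_perm).cons y
    _ ~ b ++ [y] := (List.perm_append_singleton y b).symm

lemma elemRot_head {q q' : List V} (h : ElemRot G q q') : q'.head? = q.head? := by
  obtain ⟨a, b, x, y, _, _, rfl, rfl⟩ := h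
  cases a <;> simp

lemma elemRot_path {q q' : List V} (hq : IsPathList G q) (h : ElemRot G q q') :
    IsPathList G q' := by
  have hperm := elemRot_perm h
  obtain ⟨a, b, x, y, hb, hxy, rfl, rfl⟩ := h
  obtain ⟨hc, hn⟩ := hq
  refine ⟨?_, hperm.nodup_iff.mpr hn⟩
  unfold List.Chain' at hc ⊢; rw [List.isChain_append] at hc ⊢
  obtain ⟨hca, hcx, hbd⟩ := hc
  refine ⟨hca, ?_, by simpa using hbd⟩
  rw [List.isChain_cons] at hcx ⊢
  refine ⟨by simpa using hxy, ?_⟩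
  rw [show y :: b.reverse = (b ++ [y]).reverse by simp, List.isChain_reverse]
  exact List.IsChain.imp (fun a b hab => hab.symm) hcx.2

lemma rot_facts {P Q : List V} (hP : IsPathList G P)
    (h : Relation.ReflTransGen (ElemRot G) P Q) :
    IsPathList G Q ∧ Q ~ P ∧ Q.head? = P.head? := by
  induction h with
  | refl => exact ⟨hP, List.Perm.refl _, rfl⟩
  | tail h' hstep ih =>
    exact ⟨elemRot_path ih.1 hstep, (elemRot_perm hstep).trans ih.2.1,
      (elemRot_head hstep).trans ih.2.2⟩

lemma endpoint_mem {P Q : List V} {z : V} (hP : IsPathList G P)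
    (h : Relation.ReflTransGen (ElemRot G) P Q) (hz : Q.getLast? = some z)
    (hlen : 2 ≤ Q.length) : z ∈ rotEnds G P := by
  refine ⟨Q, h, hz, ?_⟩
  obtain ⟨hQp, _, hQh⟩ := rot_facts hP h
  intro hcontra
  rw [← hQh] at hcontra
  obtain ⟨cq, tq, rfl⟩ : ∃ cq tq, Q = cq :: tq := by
    cases Q with
    | nil => simp at hlen
    | cons c t => exact ⟨c, t, rfl⟩
  obtain ⟨d, t, rfl⟩ : ∃ d t, tq = d :: t := by
    cases tq with
    | nil => simp at hlen
    | cons c t => exact ⟨c, t, rfl⟩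
  simp only [List.head?_cons, Option.some.injEq] at hcontra
  rw [List.getLast?_cons_cons] at hz
  have hzmem : z ∈ d :: t := List.mem_of_mem_getLast? (by rw [hz]; rfl)
  have hnd := hQp.2
  rw [List.nodup_cons, hcontra] at hnd
  exact hnd.1 hzmem

lemma mem_ps {P : List V} {R : Set V} {w z : V} (hz : z ∈ R)
    (h : [w, z] <:+: P ∨ [z, w] <:+: P) :
    w ∈ predAlong P R ∪ succAlong P R := by
  rcases h with h | h
  · obtain ⟨i, h1, h2⟩ := pair_infix_iff_get.mp h
    exact Or.inl ⟨z, hz, i, h1, h2⟩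
  · obtain ⟨i, h1, h2⟩ := pair_infix_iff_get.mp h
    exact Or.inr ⟨z, hz, i, h1, h2⟩

lemma rot_invariant {P : List V} {w : V} (hP : IsPathList G P)
    (hw : w ∉ rotEnds G P)
    (hC : w ∉ predAlong P (rotEnds G P) ∪ succAlong P (rotEnds G P))
    {Q : List V} (h : Relation.ReflTransGen (ElemRot G) P Q) :
    ∀ z, ([w, z] <:+: Q ∨ [z, w] <:+: Q) → ([w, z] <:+: P ∨ [z, w] <:+: P) := by
  induction h with
  | refl => exact fun z hz => hz
  | @tail q q' h' hstep ih =>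
    intro z hz
    have hreach' : Relation.ReflTransGen (ElemRot G) P q' := h'.tail hstep
    obtain ⟨a, b, x, y, hb, hxy, hq, hq'⟩ := hstep
    obtain ⟨c, b', rfl⟩ := List.exists_cons_of_ne_nil hb
    -- endpoint of q is y
    have hqlast : q.getLast? = some y := by
      rw [hq, show a ++ x :: (c :: b' ++ [y]) = (a ++ x :: c :: b') ++ [y] by simp]
      exact List.getLast?_concat
    have hqlen : 2 ≤ q.length := by rw [hq]; simp; omega
    -- endpoint of q' is c
    have hq'last : q'.getLast? = some c := by
      rw [hq', show a ++ x :: y :: (c :: b').reverse = (a ++ x :: y :: b'.reverse) ++ [c] by simp]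
      exact List.getLast?_concat
    have hq'len : 2 ≤ q'.length := by rw [hq']; simp; omega
    -- the two "bad" cases
    have hcase1 : w = x → z = y → ([w, z] <:+: P ∨ [z, w] <:+: P) := by
      rintro rfl rfl
      exfalso
      have hpair : [w, c] <:+: q := by
        rw [hq]; exact ⟨a, b' ++ [z], by simp⟩
      have hcR : c ∈ rotEnds G P := endpoint_mem hP hreach' hq'last hq'len
      exact hC (mem_ps hcR (ih c (Or.inl hpair)))
    have hcase2 : z = x → w = y → ([w, z] <:+: P ∨ [z, w] <:+: P) := by
      rintro rfl rfl
      exact absurd (endpoint_mem hP h' hqlast hqlen) hw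
    rw [hq'] at hz
    rcases hz with h1 | h1
    · rcases rot_pair h1 with h2 | h2 | ⟨rfl, rfl⟩
      · exact ih z (Or.inl (hq ▸ h2))
      · exact ih z (Or.inr (hq ▸ h2))
      · exact hcase1 rfl rfl
    · rcases rot_pair h1 with h2 | h2 | ⟨rfl, rfl⟩
      · exact ih z (Or.inr (hq ▸ h2))
      · exact ih z (Or.inl (hq ▸ h2))
      · exact hcase2 rfl rfl

end Helpers

theorem stmt_4 {V : Type*} [Fintype V] [DecidableEq V] (G : SimpleGraph V)
    (P : List V) (hne : P ≠ [])
    (hpath : IsPathList G P)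
    (hlongest : ∀ Q : List V, IsPathList G Q → Q.length ≤ P.length) :
    ∀ w : V, w ∉ rotEnds G P → (∃ v ∈ rotEnds G P, G.Adj v w) →
      w ∈ predAlong P (rotEnds G P) ∪ succAlong P (rotEnds G P) := by
  intro w hw ⟨v, hvR, hadj⟩
  by_contra hC
  obtain ⟨Q, hQr, hQlast, hPh⟩ := hvR
  obtain ⟨hQpath, hQperm, hQhead⟩ := rot_facts hpath hQr
  -- w ∈ Q, else we could extend Q
  have hwQ : w ∈ Q := by
    by_contra hnw
    have hpath' : IsPathList G (Q ++ [w]) := by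
      constructor
      · unfold List.Chain'; rw [List.isChain_append]
        refine ⟨hQpath.1, List.isChain_singleton w, ?_⟩
        intro p hp r hr
        simp only [List.head?_cons, Option.mem_def, Option.some.injEq] at hr
        rw [Option.mem_def, hQlast] at hp
        obtain rfl := Option.some.injEq _ _ ▸ hp
        subst hr
        exact hadj
      · rw [List.nodup_append']
        exact ⟨hQpath.2, List.nodup_singleton w, by
          intro p hp hps
          simp only [List.mem_singleton] at hps
          subst hps
          exact hnw hp⟩
    have := hlongest _ hpath'
    rw [List.length_append, hQperm.length_eq] at this
    simp at this
  have hwv : w ≠ v := by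
    rintro rfl
    exact hw ⟨Q, hQr, hQlast, hPh⟩
  -- find position of w in Q and its successor
  obtain ⟨i, hi, hQi⟩ := List.getElem_of_mem hwQ
  have hilt : i + 1 < Q.length := by
    rcases Nat.lt_or_ge (i + 1) Q.length with h | h
    · exact h
    have : i = Q.length - 1 := by omega
    subst this
    rw [List.getLast?_eq_getElem?, List.getElem?_eq_getElem hi, hQi] at hQlast
    exact absurd (Option.some.injEq _ _ ▸ hQlast) hwv
  obtain ⟨z, hzget⟩ : ∃ z, Q[i + 1]? = some z := ⟨Q[i + 1], List.getElem?_eq_getElem hilt⟩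
  have hpairQ : [w, z] <:+: Q := by
    rw [pair_infix_iff_get]
    exact ⟨i, by rw [List.getElem?_eq_getElem hi, hQi], hzget⟩
  have hNbrP := rot_invariant hpath hw hC hQr z (Or.inl hpairQ)
  -- z ∈ rotEnds
  have hzR : z ∈ rotEnds G P := by
    by_cases hzv : z = v
    · subst hzv
      exact ⟨Q, hQr, hQlast, hPh⟩
    · -- rotate Q at w using the edge (w, v)
      set d := Q.drop (i + 1) with hddef
      have hdne : d ≠ [] := by
        rw [hddef, ← List.length_pos_iff]
        simp [List.length_drop]
        omega
      have hdlast : d.getLast? = some v := by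
        have hQsplit : Q = Q.take (i + 1) ++ d := (List.take_append_drop _ _).symm
        have h2 := hQlast
        rw [hQsplit, List.getLast?_append] at h2
        rcases hod : d.getLast? with _ | e
        · rw [List.getLast?_eq_none_iff] at hod
          exact absurd hod hdne
        · rw [hod] at h2
          simpa using h2
      have hdhead : d.head? = some z := by
        rw [hddef, List.head?_drop, hzget]
      set b := d.dropLast with hbdef
      have hdeq : d = b ++ [v] := by
        have := List.dropLast_append_getLast hdne
        rw [show d.getLast hdne = v from ?_] at this
        · exact this.symm
        · have := List.getLast?_eq_getLast hdne
          rw [hdlast] at this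
          exact (Option.some.injEq _ _ ▸ this).symm
      have hbne : b ≠ [] := by
        intro hbnil
        rw [hbnil] at hdeq
        rw [hdeq] at hdhead
        simp at hdhead
        exact hzv hdhead.symm
      have hQeq : Q = Q.take i ++ w :: (b ++ [v]) := by
        conv_lhs => rw [← List.take_append_drop i Q, List.drop_eq_getElem_cons hi, hQi]
        rw [← hddef, hdeq]
      have hrot : ElemRot G Q (Q.take i ++ w :: v :: b.reverse) :=
        ⟨Q.take i, b, w, v, hbne, hadj.symm, hQeq, rfl⟩
      have hreach' := hQr.tail hrot
      obtain ⟨c, b', hbeq⟩ := List.exists_cons_of_ne_nil hbne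
      have hzc : z = c := by
        have := hdhead
        rw [hdeq, hbeq] at this
        simp at this
        exact this.symm
      have hlast' : (Q.take i ++ w :: v :: b.reverse).getLast? = some z := by
        rw [hbeq, hzc]
        rw [show Q.take i ++ w :: v :: (c :: b').reverse =
          (Q.take i ++ w :: v :: b'.reverse) ++ [c] by simp]
        exact List.getLast?_concat
      exact endpoint_mem hpath hreach' hlast' (by simp; omega)
  exact hC (mem_ps hzR hNbrP)
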